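/- For every finite simple graph G with strict majority thresholds and every initial assignment f_0 : V(G) → {0,1}, the non-progressive strict majority process reaches a cycle of length at most two: there exists a time T such that f_{τ+2}(v) = f_τ(v) for every vertex v ∈ V(G) and every τ ≥ T. -/

import Mathlib

/-! Non-progressive spread of influence under the strict majority threshold. -/

/-- The degree `d(v)` of a vertex: the number of its neighbors. -/
noncomputable def vdeg {V : Type*} (G : SimpleGraph V) (v : V) : ℕ :=
  {u | G.Adj v u}.ncard

/-- The strict majority threshold `t(v) = ⌈(d(v)+1)/2⌉`. -/
noncomputable def vthr {V : Type*} (G : SimpleGraph V) (v : V) : ℕ :=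
  (vdeg G v + 2) / 2

/-- The number of neighbors of `v` that are currently infected under `f`. -/
noncomputable def infNbrs {V : Type*} (G : SimpleGraph V) (f : V → Prop) (v : V) : ℕ :=
  {u | G.Adj v u ∧ f u}.ncard

/-- The state `f_τ` of the non-progressive strict majority process started at `f0`:
`f_τ(v) = 1` iff at least `t(v)` neighbors of `v` were infected at time `τ - 1`. -/
def stateAt {V : Type*} (G : SimpleGraph V) (f0 : V → Prop) : ℕ → V → Prop
  | 0 => f0
  | τ + 1 => fun v => vthr G v ≤ infNbrs G (stateAt G f0 τ) v

/-- `f0` is a perfect target set: at some finite time every vertex is infected. -/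
def IsPTS {V : Type*} (G : SimpleGraph V) (f0 : V → Prop) : Prop :=
  ∃ τ : ℕ, ∀ v, stateAt G f0 τ v

/-- The cost of an initial assignment: the number of initially infected vertices. -/
noncomputable def ptsCost {V : Type*} (f0 : V → Prop) : ℕ :=
  {v | f0 v}.ncard

/-- `NPPTS G`: the minimum cost of a perfect target set of `G` (non-progressive model). -/
noncomputable def NPPTS {V : Type*} (G : SimpleGraph V) : ℕ :=
  sInf {c | ∃ f0 : V → Prop, IsPTS G f0 ∧ ptsCost f0 = c}

open Finset Classical in
section
variable {V : Type*} [Fintype V] (G : SimpleGraph V) (f0 : V → Prop)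

noncomputable def Astate (t : ℕ) (v : V) : ℤ := if stateAt G f0 t v then 1 else 0

noncomputable def Ssum (t : ℕ) (v : V) : ℤ :=
  ∑ u, if G.Adj v u then Astate G f0 t u else 0

lemma Astate_nonneg (t : ℕ) (v : V) : 0 ≤ Astate G f0 t v := by
  unfold Astate; split <;> norm_num

lemma Astate_le_one (t : ℕ) (v : V) : Astate G f0 t v ≤ 1 := by
  unfold Astate; split <;> norm_num

lemma Ssum_eq (t : ℕ) (v : V) :
    Ssum G f0 t v = (infNbrs G (stateAt G f0 t) v : ℤ) := by
  classical
  unfold Ssum Astate infNbrs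
  rw [Set.ncard_eq_toFinset_card', Set.toFinset_setOf]
  rw [← Finset.sum_boole]
  push_cast
  apply Finset.sum_congr rfl
  intro u _
  by_cases h1 : G.Adj v u <;> by_cases h2 : stateAt G f0 t u <;> simp [h1, h2]

lemma upd (t : ℕ) (v : V) :
    stateAt G f0 (t+1) v ↔ (vthr G v : ℤ) ≤ Ssum G f0 t v := by
  rw [Ssum_eq]
  show vthr G v ≤ infNbrs G (stateAt G f0 t) v ↔ _
  exact_mod_cast Iff.rfl

end

section
variable {V : Type*} [Fintype V] (G : SimpleGraph V) (f0 : V → Prop)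
open Finset Classical

noncomputable def En (t : ℕ) : ℤ :=
  (∑ v, (vthr G v : ℤ) * (Astate G f0 t v + Astate G f0 (t+1) v))
    - ∑ v, Astate G f0 (t+1) v * Ssum G f0 t v

lemma symm_sum (t : ℕ) :
    ∑ v, Astate G f0 (t+1) v * Ssum G f0 t v
      = ∑ v, Astate G f0 t v * Ssum G f0 (t+1) v := by
  classical
  unfold Ssum
  simp_rw [Finset.mul_sum]
  rw [Finset.sum_comm]
  apply Finset.sum_congr rfl
  intro u _
  apply Finset.sum_congr rfl
  intro v _
  by_cases h : G.Adj v u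
  · simp [h, G.adj_symm h, mul_comm]
  · have h' : ¬ G.Adj u v := fun hh => h (G.adj_symm hh)
    simp [h, h']

lemma En_diff (t : ℕ) :
    En G f0 (t+1) - En G f0 t
      = ∑ v, (Astate G f0 (t+2) v - Astate G f0 t v)
          * ((vthr G v : ℤ) - Ssum G f0 (t+1) v) := by
  unfold En
  rw [symm_sum G f0 t]
  rw [← Finset.sum_sub_distrib, ← Finset.sum_sub_distrib, ← Finset.sum_sub_distrib]
  apply Finset.sum_congr rfl
  intro v _
  have : (t + 1 + 1) = t + 2 := rfl
  rw [this]
  ring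

lemma term_nonpos (t : ℕ) (v : V) :
    (Astate G f0 (t+2) v - Astate G f0 t v) * ((vthr G v : ℤ) - Ssum G f0 (t+1) v) ≤ 0 := by
  by_cases h : stateAt G f0 (t+2) v
  · have hS : (vthr G v : ℤ) ≤ Ssum G f0 (t+1) v := (upd G f0 (t+1) v).mp h
    have h1 : Astate G f0 (t+2) v = 1 := if_pos h
    have := Astate_le_one G f0 t v
    nlinarith [Astate_nonneg G f0 t v]
  · have hS : ¬ (vthr G v : ℤ) ≤ Ssum G f0 (t+1) v := fun hh => h ((upd G f0 (t+1) v).mpr hh)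
    push_neg at hS
    have h0 : Astate G f0 (t+2) v = 0 := if_neg h
    nlinarith [Astate_nonneg G f0 t v, Astate_le_one G f0 t v]

lemma term_neg (t : ℕ) (v : V) (hv : stateAt G f0 t v) (hv2 : ¬ stateAt G f0 (t+2) v) :
    (Astate G f0 (t+2) v - Astate G f0 t v) * ((vthr G v : ℤ) - Ssum G f0 (t+1) v) ≤ -1 := by
  have hS : ¬ (vthr G v : ℤ) ≤ Ssum G f0 (t+1) v := fun hh => hv2 ((upd G f0 (t+1) v).mpr hh)
  push_neg at hS
  have h0 : Astate G f0 (t+2) v = 0 := if_neg hv2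
  have h1 : Astate G f0 t v = 1 := if_pos hv
  rw [h0, h1]
  linarith

end

lemma mono_stab (f : ℕ → ℕ) (hm : Monotone f) (C : ℕ) (hb : ∀ t, f t ≤ C) :
    ∃ T, ∀ t, T ≤ t → f t = f T := by
  have hne : (Set.range f).Nonempty := ⟨f 0, 0, rfl⟩
  have hbdd : BddAbove (Set.range f) := ⟨C, by rintro x ⟨t, rfl⟩; exact hb t⟩
  obtain ⟨T, hT⟩ := Nat.sSup_mem hne hbdd
  refine ⟨T, fun t ht => le_antisymm ?_ (hm ht)⟩
  rw [hT]; exact le_csSup hbdd ⟨t, rfl⟩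

section
variable {V : Type*} [Fintype V] (G : SimpleGraph V) (f0 : V → Prop)
open Finset Classical

lemma En_lower (t : ℕ) : -(Fintype.card V * Fintype.card V : ℤ) ≤ En G f0 t := by
  unfold En
  have h1 : (0:ℤ) ≤ ∑ v, (vthr G v : ℤ) * (Astate G f0 t v + Astate G f0 (t+1) v) := by
    apply Finset.sum_nonneg
    intro v _
    have h := Astate_nonneg G f0 t v
    have h' := Astate_nonneg G f0 (t+1) v
    positivity
  have h2 : ∑ v, Astate G f0 (t+1) v * Ssum G f0 t v
      ≤ (Fintype.card V * Fintype.card V : ℤ) := by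
    have key : ∀ v : V, Astate G f0 (t+1) v * Ssum G f0 t v ≤ (Fintype.card V : ℤ) := by
      intro v
      have hS0 : (0:ℤ) ≤ Ssum G f0 t v := by
        apply Finset.sum_nonneg; intro u _
        split
        · exact Astate_nonneg G f0 t u
        · exact le_refl 0
      have hSc : Ssum G f0 t v ≤ (Fintype.card V : ℤ) := by
        unfold Ssum
        calc ∑ u, (if G.Adj v u then Astate G f0 t u else 0)
            ≤ ∑ _u : V, (1:ℤ) := by
              apply Finset.sum_le_sum; intro u _
              split
              · exact Astate_le_one G f0 t u
              · norm_num
          _ = (Fintype.card V : ℤ) := by simp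
      calc Astate G f0 (t+1) v * Ssum G f0 t v
          ≤ 1 * Ssum G f0 t v := by
            apply mul_le_mul_of_nonneg_right (Astate_le_one G f0 (t+1) v) hS0
        _ = Ssum G f0 t v := one_mul _
        _ ≤ _ := hSc
    calc ∑ v, Astate G f0 (t+1) v * Ssum G f0 t v
        ≤ ∑ _v : V, (Fintype.card V : ℤ) := Finset.sum_le_sum (fun v _ => key v)
      _ = (Fintype.card V * Fintype.card V : ℤ) := by
          simp [mul_comm]
  linarith

end

section
variable {V : Type*} [Fintype V] (G : SimpleGraph V) (f0 : V → Prop)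
open Finset Classical

/-- `t` is a bad time: some infected vertex becomes uninfected two steps later. -/
def badT (t : ℕ) : Prop := ∃ v, stateAt G f0 t v ∧ ¬ stateAt G f0 (t+2) v

lemma En_mono (t : ℕ) : En G f0 (t+1) ≤ En G f0 t := by
  have h := En_diff G f0 t
  have h2 : ∑ v, (Astate G f0 (t+2) v - Astate G f0 t v)
      * ((vthr G v : ℤ) - Ssum G f0 (t+1) v) ≤ 0 :=
    Finset.sum_nonpos (fun v _ => term_nonpos G f0 t v)
  linarith

lemma En_strict (t : ℕ) (hb : badT G f0 t) : En G f0 (t+1) ≤ En G f0 t - 1 := by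
  classical
  obtain ⟨v, hv, hv2⟩ := hb
  have h := En_diff G f0 t
  set F : V → ℤ := fun v => (Astate G f0 (t+2) v - Astate G f0 t v)
      * ((vthr G v : ℤ) - Ssum G f0 (t+1) v) with hF
  have hsplit : ∑ u, F u = F v + ∑ u ∈ Finset.univ.erase v, F u := by
    rw [← Finset.add_sum_erase _ F (Finset.mem_univ v)]
  have h1 : F v ≤ -1 := term_neg G f0 t v hv hv2
  have h2 : ∑ u ∈ Finset.univ.erase v, F u ≤ 0 :=
    Finset.sum_nonpos (fun u _ => term_nonpos G f0 t u)
  have : ∑ u, F u ≤ -1 := by rw [hsplit]; linarith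
  rw [hF] at this
  linarith [h ▸ this]

noncomputable def badCount (t : ℕ) : ℕ :=
  ((Finset.range t).filter (fun s => badT G f0 s)).card

lemma En_le (t : ℕ) : En G f0 t + (badCount G f0 t : ℤ) ≤ En G f0 0 := by
  classical
  induction t with
  | zero => simp [badCount]
  | succ t ih =>
    have hc : badCount G f0 (t+1)
        = badCount G f0 t + (if badT G f0 t then 1 else 0) := by
      unfold badCount
      rw [Finset.range_add_one, Finset.filter_insert]
      split
      · rw [Finset.card_insert_of_notMem (by simp)]
      · simp
    by_cases hb : badT G f0 t
    · have := En_strict G f0 t hb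
      rw [hc, if_pos hb]
      push_cast
      linarith
    · have := En_mono G f0 t
      rw [hc, if_neg hb]
      push_cast
      linarith

lemma badCount_bdd (t : ℕ) :
    badCount G f0 t ≤ (En G f0 0 + (Fintype.card V * Fintype.card V : ℤ)).toNat := by
  have h1 := En_le G f0 t
  have h2 := En_lower G f0 t
  have : (badCount G f0 t : ℤ) ≤ En G f0 0 + (Fintype.card V * Fintype.card V : ℤ) := by
    linarith
  omega

lemma eventually_no_bad : ∃ T, ∀ t, T ≤ t → ∀ v, stateAt G f0 t v → stateAt G f0 (t+2) v := by
  classical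
  have hm : Monotone (badCount G f0) := by
    intro a b hab
    exact Finset.card_le_card (Finset.monotone_filter_left _ (Finset.range_subset_range.mpr hab))
  obtain ⟨T, hT⟩ := mono_stab (badCount G f0) hm _ (badCount_bdd G f0)
  refine ⟨T, fun t ht v hv => ?_⟩
  by_contra hv2
  have hb : badT G f0 t := ⟨v, hv, hv2⟩
  have hc : badCount G f0 (t+1) = badCount G f0 t + 1 := by
    unfold badCount
    rw [Finset.range_add_one, Finset.filter_insert, if_pos hb,
      Finset.card_insert_of_notMem (by simp)]
  have := hT t ht
  have := hT (t+1) (le_trans ht (Nat.le_succ t))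
  omega

end

open Finset Classical in
theorem stmt_15' {V : Type*} [Fintype V] (G : SimpleGraph V) (f0 : V → Prop) :
    ∃ T : ℕ, ∀ τ : ℕ, T ≤ τ → ∀ v, (stateAt G f0 (τ + 2) v ↔ stateAt G f0 τ v) := by
  classical
  obtain ⟨T, hT⟩ := eventually_no_bad G f0
  -- the sets of infected vertices along each parity class, from time T on
  set St : ℕ → Finset V := fun t => Finset.univ.filter (stateAt G f0 t) with hSt
  have hsub : ∀ t, T ≤ t → St t ⊆ St (t+2) := by
    intro t ht v hv
    rw [hSt, Finset.mem_filter] at hv ⊢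
    exact ⟨Finset.mem_univ v, hT t ht v hv.2⟩
  set g : ℕ → ℕ := fun k => (St (T + 2*k)).card + (St (T + 1 + 2*k)).card with hg
  have hgm : Monotone g := by
    apply monotone_nat_of_le_succ
    intro k
    have h1 : St (T + 2*k) ⊆ St (T + 2*k + 2) := hsub _ (by omega)
    have h2 : St (T + 1 + 2*k) ⊆ St (T + 1 + 2*k + 2) := hsub _ (by omega)
    have e1 : T + 2*(k+1) = T + 2*k + 2 := by ring
    have e2 : T + 1 + 2*(k+1) = T + 1 + 2*k + 2 := by ring
    rw [hg]
    simp only [e1, e2]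
    exact Nat.add_le_add (Finset.card_le_card h1) (Finset.card_le_card h2)
  have hgb : ∀ k, g k ≤ Fintype.card V + Fintype.card V :=
    fun k => Nat.add_le_add (Finset.card_le_univ _) (Finset.card_le_univ _)
  obtain ⟨K, hK⟩ := mono_stab g hgm _ hgb
  refine ⟨T + 2*K, fun τ hτ v => ?_⟩
  -- for any t ≥ T + 2K in the right parity, the set equals the one two steps later
  have key : ∀ t, T ≤ t → St t = St (t + 2) → ∀ v, (stateAt G f0 (t+2) v ↔ stateAt G f0 t v) := by
    intro t ht he v
    constructor
    · intro h
      have : v ∈ St (t+2) := Finset.mem_filter.mpr ⟨Finset.mem_univ v, h⟩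
      rw [← he] at this
      exact (Finset.mem_filter.mp this).2
    · exact hT t ht v
  have hgeq : ∀ k, K ≤ k → St (T + 2*k) = St (T + 2*k + 2) ∧
      St (T + 1 + 2*k) = St (T + 1 + 2*k + 2) := by
    intro k hk
    have h1 : St (T + 2*k) ⊆ St (T + 2*k + 2) := hsub _ (by omega)
    have h2 : St (T + 1 + 2*k) ⊆ St (T + 1 + 2*k + 2) := hsub _ (by omega)
    have hgk : g (k+1) = g k := by rw [hK k hk, hK (k+1) (by omega)]
    have e1 : T + 2*(k+1) = T + 2*k + 2 := by ring
    have e2 : T + 1 + 2*(k+1) = T + 1 + 2*k + 2 := by ring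
    rw [hg] at hgk
    simp only [e1, e2] at hgk
    have c1 := Finset.card_le_card h1
    have c2 := Finset.card_le_card h2
    constructor
    · exact Finset.eq_of_subset_of_card_le h1 (by omega)
    · exact Finset.eq_of_subset_of_card_le h2 (by omega)
  -- now split on parity of τ - T
  rcases Nat.even_or_odd (τ - T) with ⟨k, hk⟩ | ⟨k, hk⟩
  · have hτe : τ = T + 2*k := by omega
    have hkK : K ≤ k := by omega
    have := (hgeq k hkK).1
    rw [hτe]
    exact key (T + 2*k) (by omega) this v
  · have hτe : τ = T + 1 + 2*k := by omega
    have hkK : K ≤ k := by omega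
    have := (hgeq k hkK).2
    rw [hτe]
    exact key (T + 1 + 2*k) (by omega) this v


/-- On every finite simple graph with strict majority thresholds, the
non-progressive process started from any initial assignment reaches a cycle of length at
most two: from some time `T` on, `f_{τ+2} = f_τ`. -/
theorem stmt_15 {V : Type*} [Fintype V] (G : SimpleGraph V) (f0 : V → Prop) :
    ∃ T : ℕ, ∀ τ : ℕ, T ≤ τ → ∀ v, (stateAt G f0 (τ + 2) v ↔ stateAt G f0 τ v) :=
  stmt_15' G f0
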